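/- arXiv:1312.2546 — 2 statements merged into one kernel-verified Lean document; each statement's English description precedes it below -/
import Mathlib

section
/- Suppose a planar graph on V vertices can be split, for any ε > 0, by removing at most 4·√(V/ε) vertices into components each of size at most ε·V. Then for any m ≥ 1, the vertex set can be partitioned into sets V_1, V_2, ... each of size at most C·m such that the total number of removed (separator) vertices is at most C·V/√m, for some absolute constant C. -/
/-- Assuming the recursive planar separator theorem (for every `ε > 0` one
can remove at most `4√(V/ε)` vertices so that every remaining connected component has at
most `ε·V` vertices) for a bounded-degree graph, for every `m ≥ 1` the vertex set can be
partitioned into parts of size at most `C·m` with a separator set `R` of size at most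
`C·V/√m` such that every edge between distinct parts touches `R`. -/
theorem stmt_6 (d : ℕ) :
    ∃ C : ℝ, 0 < C ∧
      ∀ (α : Type) [Fintype α] [DecidableEq α] (G : SimpleGraph α)
        [DecidableRel G.Adj],
        (∀ v, G.degree v ≤ d) →
        (∀ ε : ℝ, 0 < ε →
          ∃ R : Finset α, ((R.card : ℝ) ≤ 4 * Real.sqrt ((Fintype.card α : ℝ) / ε)) ∧
            ∀ c : (G.induce {u : α | u ∉ R}).ConnectedComponent,
              (c.supp.ncard : ℝ) ≤ ε * Fintype.card α) →
        ∀ m : ℝ, 1 ≤ m →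
          ∃ (P : Finpartition (Finset.univ : Finset α)) (R : Finset α),
            ((R.card : ℝ) ≤ C * (Fintype.card α : ℝ) / Real.sqrt m) ∧
            (∀ p ∈ P.parts, (p.card : ℝ) ≤ C * m) ∧
            (∀ u v : α, G.Adj u v → u ∉ R → v ∉ R →
              ∀ p ∈ P.parts, u ∈ p → v ∈ p) := by
  refine ⟨4, by norm_num, ?_⟩
  intro α _ _ G _ hdeg hsep m hm
  have hm0 : (0 : ℝ) < m := lt_of_lt_of_le one_pos hm
  have hsm : (0 : ℝ) < Real.sqrt m := Real.sqrt_pos.mpr hm0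
  rcases Nat.eq_zero_or_pos (Fintype.card α) with hc | hc
  · -- empty graph
    haveI hE : IsEmpty α := Fintype.card_eq_zero_iff.mp hc
    refine ⟨Finpartition.ofSetoid (⟨Eq, eq_equivalence⟩ : Setoid α), ∅, ?_, ?_, ?_⟩
    · simp only [Finset.card_empty, Nat.cast_zero]
      positivity
    · intro p hp
      obtain ⟨x, hx⟩ := Finpartition.nonempty_of_mem_parts _ hp
      exact (hE.false x).elim
    · intro u; exact (hE.false u).elim
  · set V : ℝ := (Fintype.card α : ℝ) with hVdef
    have hV : (0 : ℝ) < V := by rw [hVdef]; exact_mod_cast hc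
    have hε : (0 : ℝ) < m / V := div_pos hm0 hV
    obtain ⟨R, hR, hcomp⟩ := hsep (m / V) hε
    -- the setoid
    set H := G.induce {u : α | u ∉ R} with hHdef
    let r : α → α → Prop := fun u v =>
      u = v ∨ ∃ (hu : u ∉ R) (hv : v ∉ R),
        H.connectedComponentMk ⟨u, hu⟩ = H.connectedComponentMk ⟨v, hv⟩
    have hrequiv : Equivalence r := by
      constructor
      · intro a; exact Or.inl rfl
      · rintro a b (rfl | ⟨ha, hb, h⟩)
        · exact Or.inl rfl
        · exact Or.inr ⟨hb, ha, h.symm⟩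
      · rintro a b c (rfl | ⟨ha, hb, h⟩) h2
        · exact h2
        · rcases h2 with rfl | ⟨hb', hc, h'⟩
          · exact Or.inr ⟨ha, hb, h⟩
          · exact Or.inr ⟨ha, hc, h.trans h'⟩
    let s : Setoid α := ⟨r, hrequiv⟩
    haveI : DecidableRel s.r := fun _ _ => Classical.dec _
    refine ⟨Finpartition.ofSetoid s, R, ?_, ?_, ?_⟩
    · -- size of separator
      have h1 : V / (m / V) = V * V / m := div_div_eq_mul_div V m V
      have h2 : Real.sqrt (V * V / m) = V / Real.sqrt m := by
        rw [Real.sqrt_div (by positivity) m, Real.sqrt_mul_self hV.le]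
      calc (R.card : ℝ) ≤ 4 * Real.sqrt (V / (m / V)) := hR
        _ = 4 * (V / Real.sqrt m) := by rw [h1, h2]
        _ = 4 * V / Real.sqrt m := by ring
    · -- size of parts
      intro p hp
      have hp' := hp
      simp only [Finpartition.ofSetoid, Finpartition.ofSetSetoid, Finset.mem_image, Finset.mem_univ, true_and] at hp'
      obtain ⟨a, rfl⟩ := hp'
      by_cases ha : a ∈ R
      · -- singleton part
        have hsub : Finset.filter (fun b => s.r a b) Finset.univ ⊆ {a} := by
          intro b hb
          simp only [Finset.mem_filter, Finset.mem_univ, true_and] at hb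
          rcases hb with rfl | ⟨ha', _, _⟩
          · exact Finset.mem_singleton_self _
          · exact absurd ha ha'
        have := Finset.card_le_card hsub
        simp only [Finset.card_singleton] at this
        have : ((Finset.filter (fun b => s.r a b) Finset.univ).card : ℝ) ≤ 1 := by exact_mod_cast this
        nlinarith
      · -- part inside a connected component
        set c := H.connectedComponentMk ⟨a, ha⟩ with hcdef
        haveI : Fintype c.supp := Fintype.ofFinite _
        have hmap : ∀ b ∈ Finset.filter (fun b => s.r a b) Finset.univ,
            ∃ hb : b ∉ R, (⟨b, hb⟩ : {u : α | u ∉ R}) ∈ c.supp := by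
          intro b hb
          simp only [Finset.mem_filter, Finset.mem_univ, true_and] at hb
          rcases hb with rfl | ⟨ha', hb', h⟩
          · exact ⟨ha, rfl⟩
          · exact ⟨hb', h.symm⟩
        have hcard : (Finset.filter (fun b => s.r a b) Finset.univ).card ≤ c.supp.toFinset.card := by
          apply Finset.card_le_card_of_injOn
            (fun b => if hb : b ∉ R then (⟨b, hb⟩ : {u : α | u ∉ R}) else ⟨a, ha⟩)
          · intro b hb
            obtain ⟨hb', hsupp⟩ := hmap b hb
            simp only [hb', dif_pos, not_false_eq_true, dite_true, Finset.mem_coe, Set.mem_toFinset]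
            exact hsupp
          · intro b1 hb1 b2 hb2 heq
            obtain ⟨h1, _⟩ := hmap b1 hb1
            obtain ⟨h2, _⟩ := hmap b2 hb2
            simp only [h1, h2, dif_pos] at heq
            exact congrArg Subtype.val heq
        have hncard : (c.supp.toFinset.card : ℝ) = (c.supp.ncard : ℝ) := by
          rw [Set.ncard_eq_toFinset_card']
        calc ((Finset.filter (fun b => s.r a b) Finset.univ).card : ℝ)
            ≤ (c.supp.toFinset.card : ℝ) := by exact_mod_cast hcard
          _ = (c.supp.ncard : ℝ) := hncard
          _ ≤ (m / V) * V := hcomp c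
          _ = m := div_mul_cancel₀ m hV.ne'
          _ ≤ 4 * m := by nlinarith
    · -- edges within parts
      intro u v huv hu hv p hp hup
      have hp' := hp
      simp only [Finpartition.ofSetoid, Finpartition.ofSetSetoid, Finset.mem_image, Finset.mem_univ, true_and] at hp'
      obtain ⟨a, rfl⟩ := hp'
      simp only [Finset.mem_filter, Finset.mem_univ, true_and] at hup ⊢
      have hadj : H.Adj ⟨u, hu⟩ ⟨v, hv⟩ := huv
      have huvr : s.r u v :=
        Or.inr ⟨hu, hv, SimpleGraph.ConnectedComponent.sound hadj.reachable⟩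
      exact hrequiv.trans hup huvr
end

section
/- Deterministic subround scheme: partition a collection of local correction operations into k = O(1) color classes such that operations of the same color do not interact, and each operation interacts with at most D operations of other colors. Let W_a ≥ 0 be the weight reduction that color class a would achieve if run first, and suppose the actual reduction W'_a of class a satisfies W'_a ≥ W_a − D·Σ_{b<a} W'_b. Then Σ_a W'_a ≥ (1/(1+D)^{k}) · max_a W_a; in particular Σ_a W'_a ≥ c(k,D) · Σ_a W_a for c(k,D) = 1/(k(1+D)^k). -/
/-- Deterministic subround scheme. With `k` color classes, if the actual
weight reduction satisfies `W'_a ≥ W_a − D·Σ_{b<a} W'_b`, then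
`Σ_a W'_a ≥ (1/(1+D)^k)·W_a` for every `a`, and
`Σ_a W'_a ≥ (1/(k(1+D)^k))·Σ_a W_a`. -/
theorem stmt_9 (k : ℕ) (hk : 0 < k) (D : ℝ) (hD : 0 ≤ D) (W W' : Fin k → ℝ)
    (hW : ∀ a, 0 ≤ W a) (hW' : ∀ a, 0 ≤ W' a)
    (hrec : ∀ a, W a - D * ∑ b ∈ Finset.univ.filter (· < a), W' b ≤ W' a) :
    (∀ a, (1 / (1 + D) ^ k) * W a ≤ ∑ a, W' a) ∧
      (1 / (k * (1 + D) ^ k)) * ∑ a, W a ≤ ∑ a, W' a := by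
  set S := ∑ a, W' a with hS
  have hSnn : 0 ≤ S := Finset.sum_nonneg fun a _ => hW' a
  have hpow : (0:ℝ) < (1 + D) ^ k := pow_pos (by linarith) k
  have hle1 : (1:ℝ) + D ≤ (1 + D) ^ k := le_self_pow₀ (by linarith) hk.ne'
  have key : ∀ a, W a ≤ (1 + D) ^ k * S := by
    intro a
    have h1 : W' a ≤ S := Finset.single_le_sum (fun b _ => hW' b) (Finset.mem_univ a)
    have h2 : ∑ b ∈ Finset.univ.filter (· < a), W' b ≤ S := by
      apply Finset.sum_le_sum_of_subset_of_nonneg (Finset.filter_subset _ _)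
      intro b _ _; exact hW' b
    have h3 : W a ≤ (1 + D) * S := by
      have := hrec a
      nlinarith [mul_le_mul_of_nonneg_left h2 hD]
    calc W a ≤ (1 + D) * S := h3
      _ ≤ (1 + D) ^ k * S := mul_le_mul_of_nonneg_right hle1 hSnn
  constructor
  · intro a
    rw [one_div, inv_mul_le_iff₀ hpow]
    exact key a
  · have hksum : ∑ a, W a ≤ k * ((1 + D) ^ k * S) := by
      calc ∑ a, W a ≤ ∑ _a : Fin k, (1 + D) ^ k * S :=
            Finset.sum_le_sum fun a _ => key a
        _ = k * ((1 + D) ^ k * S) := by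
            simp [Finset.sum_const, Finset.card_univ, nsmul_eq_mul]
    have hkpos : (0:ℝ) < (k : ℝ) * (1 + D) ^ k := by
      have : (0:ℝ) < (k:ℝ) := Nat.cast_pos.mpr hk
      positivity
    rw [one_div, inv_mul_le_iff₀ hkpos]
    calc ∑ a, W a ≤ k * ((1 + D) ^ k * S) := hksum
      _ = (k : ℝ) * (1 + D) ^ k * S := by ring
end
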